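/- arXiv:2301.04398 — 3 statements merged into one kernel-verified Lean document; each statement's English description precedes it below -/
import Mathlib

section
/- Let (X, Y) be an exceptional pair in C such that Hom(X, Y⟦m⟧) = 0 for all m ≠ 0 and Hom(X, Y) is one-dimensional over k. Let f : X → Y be a nonzero morphism and let X →f Y → Z → X⟦1⟧ be a distinguished triangle. Then (Y, Z) is an exceptional pair; in particular Z is an exceptional object and Hom(Z, Y⟦m⟧) = 0 for all m ∈ ℤ. (The object Z⟦−1⟧ is the right mutation R_Y X of X at Y.) -/
open CategoryTheory CategoryTheory.Limits CategoryTheory.Pretriangulated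

/-- An object `X` of a `k`-linear additive category with shift is exceptional if
`Hom(X, X⟦m⟧) = 0` for all `m ≠ 0` and `Hom(X, X)` is one-dimensional over `k`. -/
def IsExceptional (k : Type*) [Field k] {C : Type*} [Category C] [Preadditive C]
    [Linear k C] [HasShift C ℤ] (X : C) : Prop :=
  (∀ m : ℤ, m ≠ 0 → ∀ f : X ⟶ X⟦m⟧, f = 0) ∧ Module.finrank k (X ⟶ X) = 1

section Helpers


variable {k : Type*} [Field k] {C : Type*} [Category C] [Preadditive C]
  [Linear k C] [HasShift C ℤ] [∀ m : ℤ, (shiftFunctor C m).Additive]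

lemma rm_one_dim_span {A B : C} (h1 : Module.finrank k (A ⟶ B) = 1) {v : A ⟶ B}
    (hv : v ≠ 0) (w : A ⟶ B) : ∃ c : k, w = c • v := by
  obtain ⟨c, hc⟩ := (finrank_eq_one_iff_of_nonzero' v hv).1 h1 w
  exact ⟨c, hc.symm⟩

lemma rm_id_ne_zero {A : C} (h1 : Module.finrank k (A ⟶ A) = 1) : (𝟙 A : A ⟶ A) ≠ 0 := by
  intro h0
  have hall : ∀ w : A ⟶ A, w = 0 := fun w => by rw [← Category.comp_id w, h0, comp_zero]
  have : Subsingleton (A ⟶ A) := subsingleton_of_forall_eq 0 fun w => hall w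
  rw [Module.finrank_zero_of_subsingleton] at h1
  exact one_ne_zero h1.symm

lemma rm_shift_hom_zero' {A B : C} {n : ℤ} (hz : ∀ φ : A ⟶ B⟦-n⟧, φ = 0)
    (v : A⟦n⟧ ⟶ B) : v = 0 := by
  have hn : -n + n = 0 := by omega
  obtain ⟨w, hw⟩ := (shiftFunctor C n).map_surjective
    (v ≫ ((shiftFunctorCompIsoId C (-n) n hn).app B).inv)
  rw [hz w, Functor.map_zero] at hw
  have h2 : (v ≫ ((shiftFunctorCompIsoId C (-n) n hn).app B).inv) ≫
      ((shiftFunctorCompIsoId C (-n) n hn).app B).hom = 0 := by rw [← hw]; simp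
  simpa using h2

lemma rm_shift_hom_zero {A B : C} {n m : ℤ} (hz : ∀ φ : A ⟶ B⟦m - n⟧, φ = 0)
    (v : A⟦n⟧ ⟶ B⟦m⟧) : v = 0 := by
  refine rm_shift_hom_zero' (fun φ => ?_) v
  have hmn : m + -n = m - n := by omega
  have hφ : φ = (φ ≫ ((shiftFunctorAdd' C m (-n) (m - n) hmn).app B).inv) ≫
      ((shiftFunctorAdd' C m (-n) (m - n) hmn).app B).hom := by simp
  rw [hφ, hz (φ ≫ ((shiftFunctorAdd' C m (-n) (m - n) hmn).app B).inv), zero_comp]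

lemma rm_hom_shift_zero {A B : C} {m : ℤ} (hz : ∀ v : A⟦-m⟧ ⟶ B, v = 0)
    (u : A ⟶ B⟦m⟧) : u = 0 := by
  have hm : m + -m = 0 := by omega
  apply (shiftFunctor C (-m)).map_injective
  rw [Functor.map_zero]
  have h1 : (shiftFunctor C (-m)).map u ≫
      ((shiftFunctorCompIsoId C m (-m) hm).app B).hom = 0 := hz _
  have he : (shiftFunctor C (-m)).map u = ((shiftFunctor C (-m)).map u ≫
      ((shiftFunctorCompIsoId C m (-m) hm).app B).hom) ≫
      ((shiftFunctorCompIsoId C m (-m) hm).app B).inv := by simp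
  rw [he, h1, zero_comp]

end Helpers

/-- Right mutation of an exceptional pair: if `(X, Y)` is an exceptional pair with
`Hom(X, Y⟦m⟧) = 0` for `m ≠ 0` and `Hom(X, Y)` one-dimensional, `f : X ⟶ Y` nonzero, and
`X ⟶ Y ⟶ Z ⟶ X⟦1⟧` a distinguished triangle, then `(Y, Z)` is an exceptional pair: `Z` is
exceptional and `Hom(Z, Y⟦m⟧) = 0` for all `m`. (`Z⟦-1⟧` is the right mutation `R_Y X`.) -/
theorem right_mutation_exceptional_pair (k : Type*) [Field k] {C : Type*} [Category C]
    [HasZeroObject C] [Preadditive C] [Linear k C] [HasShift C ℤ]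
    [∀ m : ℤ, (shiftFunctor C m).Additive] [∀ m : ℤ, (shiftFunctor C m).Linear k]
    [Pretriangulated C]
    {X Y Z : C}
    (hX : IsExceptional k X) (hY : IsExceptional k Y)
    (hpair : ∀ m : ℤ, ∀ f : Y ⟶ X⟦m⟧, f = 0)
    (hXY0 : ∀ m : ℤ, m ≠ 0 → ∀ f : X ⟶ Y⟦m⟧, f = 0)
    (hXY1 : Module.finrank k (X ⟶ Y) = 1)
    (f : X ⟶ Y) (hf : f ≠ 0)
    (g : Y ⟶ Z) (h : Z ⟶ X⟦(1 : ℤ)⟧)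
    (hT : Triangle.mk f g h ∈ distTriang C) :
    IsExceptional k Z ∧ ∀ m : ℤ, ∀ u : Z ⟶ Y⟦m⟧, u = 0 := by
  have hIdX : (𝟙 X : X ⟶ X) ≠ 0 := rm_id_ne_zero (k := k) hX.2
  have hIdY : (𝟙 Y : Y ⟶ Y) ≠ 0 := rm_id_ne_zero (k := k) hY.2
  have hXspan : ∀ u : X ⟶ X, ∃ c : k, u = c • 𝟙 X := rm_one_dim_span hX.2 hIdX
  have hYspan : ∀ u : Y ⟶ Y, ∃ c : k, u = c • 𝟙 Y := rm_one_dim_span hY.2 hIdY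
  have hXYspan : ∀ u : X ⟶ Y, ∃ c : k, u = c • f := rm_one_dim_span hXY1 hf
  -- shifted vanishing
  have hXX : ∀ {n m : ℤ}, n ≠ m → ∀ u : X⟦n⟧ ⟶ X⟦m⟧, u = 0 :=
    fun {n m} hnm u => rm_shift_hom_zero (fun φ => hX.1 _ (by omega) φ) u
  have hXY' : ∀ {n : ℤ}, n ≠ 0 → ∀ u : X⟦n⟧ ⟶ Y, u = 0 :=
    fun {n} hn u => rm_shift_hom_zero' (fun φ => hXY0 _ (by omega) φ) u
  -- triangle compositions
  have hfg : f ≫ g = 0 := comp_distTriang_mor_zero₁₂ _ hT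
  have hhf : h ≫ (shiftFunctor C (1 : ℤ)).map f = 0 := comp_distTriang_mor_zero₃₁ _ hT
  have hfne : (shiftFunctor C (1 : ℤ)).map f ≠ 0 := by
    intro h0
    exact hf ((shiftFunctor C (1 : ℤ)).map_injective (by rw [h0, Functor.map_zero]))
  -- Hom(Z, X⟦j⟧) = 0 for j ≠ 1
  have homZX : ∀ j : ℤ, j ≠ 1 → ∀ w : Z ⟶ X⟦j⟧, w = 0 := by
    intro j hj w
    obtain ⟨v, hv⟩ := Triangle.yoneda_exact₃ _ hT w (hpair j _)
    simp only [Triangle.mk_obj₁, Triangle.mk_obj₂, Triangle.mk_obj₃, Triangle.mk_mor₁, Triangle.mk_mor₂, Triangle.mk_mor₃] at hv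
    rw [hv, hXX (show (1 : ℤ) ≠ j by omega) v]; exact comp_zero
  -- Hom(Z, Y) = 0
  have homZY0 : ∀ u : Z ⟶ Y, u = 0 := by
    intro u
    obtain ⟨c, hc⟩ := hYspan (g ≫ u)
    have h0 : f ≫ g ≫ u = 0 := by rw [← Category.assoc, hfg, zero_comp]
    have hcf : c • f = 0 := by
      rw [hc, Linear.comp_smul, Category.comp_id] at h0; exact h0
    have hc0 : c = 0 := (smul_eq_zero.mp hcf).resolve_right hf
    have hgu : g ≫ u = 0 := by rw [hc, hc0, zero_smul]
    obtain ⟨v, hv⟩ := Triangle.yoneda_exact₃ _ hT u hgu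
    simp only [Triangle.mk_obj₁, Triangle.mk_obj₂, Triangle.mk_obj₃, Triangle.mk_mor₁, Triangle.mk_mor₂, Triangle.mk_mor₃] at hv
    rw [hv, hXY' one_ne_zero v]; exact comp_zero
  -- Hom(Z, Y⟦m⟧) = 0 for all m
  have homZY : ∀ m : ℤ, ∀ u : Z ⟶ Y⟦m⟧, u = 0 := by
    intro m u
    by_cases hm1 : m = 1
    · subst hm1
      obtain ⟨v, hv⟩ := Triangle.yoneda_exact₃ _ hT u (hY.1 1 one_ne_zero _)
      obtain ⟨w, hw⟩ := (shiftFunctor C (1 : ℤ)).map_surjective v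
      obtain ⟨c, hcw⟩ := hXYspan w
      have hvc : v = c • (shiftFunctor C (1 : ℤ)).map f := by
        rw [← hw, hcw]; exact Functor.map_smul _ c f
      simp only [Triangle.mk_obj₁, Triangle.mk_obj₂, Triangle.mk_obj₃, Triangle.mk_mor₁, Triangle.mk_mor₂, Triangle.mk_mor₃] at hv
      rw [hv, hvc]; exact (Linear.comp_smul _ _ _ h c _).trans ((congrArg (c • ·) hhf).trans (smul_zero c))
    by_cases hm0 : m = 0
    · subst hm0
      have h1 : u ≫ (shiftFunctorZero C ℤ).hom.app Y = 0 := homZY0 _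
      have he : u = (u ≫ (shiftFunctorZero C ℤ).hom.app Y) ≫
          (shiftFunctorZero C ℤ).inv.app Y := by simp
      rw [he, h1, zero_comp]
    · obtain ⟨v, hv⟩ := Triangle.yoneda_exact₃ _ hT u (hY.1 m hm0 _)
      simp only [Triangle.mk_obj₁, Triangle.mk_obj₂, Triangle.mk_obj₃, Triangle.mk_mor₁, Triangle.mk_mor₂, Triangle.mk_mor₃] at hv
      rw [hv, rm_shift_hom_zero (fun φ => hXY0 (m - 1) (by omega) φ) v]; exact comp_zero
  -- Hom(X, Z) = 0
  have homXZ : ∀ u : X ⟶ Z, u = 0 := by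
    intro u
    obtain ⟨v, hv⟩ := Triangle.coyoneda_exact₃ _ hT u (hX.1 1 one_ne_zero _)
    obtain ⟨c, hc⟩ := hXYspan v
    simp only [Triangle.mk_obj₁, Triangle.mk_obj₂, Triangle.mk_obj₃, Triangle.mk_mor₁, Triangle.mk_mor₂, Triangle.mk_mor₃] at hv
    rw [hv, hc]; exact (Linear.smul_comp _ _ _ c f g).trans ((congrArg (c • ·) hfg).trans (smul_zero c))
  -- Hom(X⟦1⟧, Z) = 0
  have homX1Z : ∀ u : X⟦(1 : ℤ)⟧ ⟶ Z, u = 0 := by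
    intro u
    obtain ⟨w, hw⟩ := (shiftFunctor C (1 : ℤ)).map_surjective (u ≫ h)
    obtain ⟨c, hc⟩ := hXspan w
    have huh : u ≫ h = c • 𝟙 (X⟦(1 : ℤ)⟧) := by
      rw [← hw, hc, Functor.map_smul, CategoryTheory.Functor.map_id]
    have hc0 : c = 0 := by
      have h1 : (u ≫ h) ≫ (shiftFunctor C (1 : ℤ)).map f = 0 := by
        rw [Category.assoc, hhf, comp_zero]
      rw [huh, Linear.smul_comp, Category.id_comp] at h1
      exact (smul_eq_zero.mp h1).resolve_right hfne
    have hu3 : u ≫ h = 0 := by rw [huh, hc0, zero_smul]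
    obtain ⟨v, hv⟩ := Triangle.coyoneda_exact₃ _ hT u hu3
    simp only [Triangle.mk_obj₁, Triangle.mk_obj₂, Triangle.mk_obj₃, Triangle.mk_mor₁, Triangle.mk_mor₂, Triangle.mk_mor₃] at hv
    rw [hv, hXY' one_ne_zero v]; exact zero_comp
  -- Hom(Y, Z) is spanned by g
  have homYZspan : ∀ t : Y ⟶ Z, ∃ c : k, t = c • g := by
    intro t
    obtain ⟨v, hv⟩ := Triangle.coyoneda_exact₃ _ hT t (hpair 1 _)
    obtain ⟨c, hc⟩ := hYspan v
    refine ⟨c, ?_⟩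
    simp only [Triangle.mk_obj₂, Triangle.mk_mor₂] at hv
    rw [hv, hc]; exact (Linear.smul_comp _ _ _ c (𝟙 Y) g).trans (congrArg (c • ·) (Category.id_comp g))
  -- Hom(Z⟦n⟧, Z) = 0 for n ≠ 0
  have homZnZ : ∀ n : ℤ, n ≠ 0 → ∀ u : Z⟦n⟧ ⟶ Z, u = 0 := by
    intro n hn u
    have hu3 : u ≫ h = 0 := rm_shift_hom_zero (fun φ => homZX (1 - n) (by omega) φ) _
    obtain ⟨v, hv⟩ := Triangle.coyoneda_exact₃ _ hT u hu3
    simp only [Triangle.mk_obj₁, Triangle.mk_obj₂, Triangle.mk_obj₃, Triangle.mk_mor₁, Triangle.mk_mor₂, Triangle.mk_mor₃] at hv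
    rw [hv, rm_shift_hom_zero' (fun φ => homZY (-n) φ) v]; exact zero_comp
  have hZshift : ∀ m : ℤ, m ≠ 0 → ∀ u : Z ⟶ Z⟦m⟧, u = 0 :=
    fun m hm u => rm_hom_shift_zero (fun v => homZnZ (-m) (by omega) v) u
  -- Hom(Z, Z) spanned by identity
  have hZspan : ∀ u : Z ⟶ Z, ∃ c : k, u = c • 𝟙 Z := by
    intro u
    obtain ⟨c, hc⟩ := homYZspan (g ≫ u)
    have hsub : g ≫ (u - c • 𝟙 Z) = 0 := by
      rw [Preadditive.comp_sub, hc, Linear.comp_smul, Category.comp_id, sub_self]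
    obtain ⟨w, hw⟩ := Triangle.yoneda_exact₃ _ hT (u - c • 𝟙 Z) hsub
    rw [homX1Z w] at hw; replace hw : u - c • 𝟙 Z = 0 := hw.trans comp_zero
    exact ⟨c, by rwa [sub_eq_zero] at hw⟩
  -- identity of Z is nonzero
  have hIdZ : (𝟙 Z : Z ⟶ Z) ≠ 0 := by
    intro h0
    have hZzero : IsZero Z := (IsZero.iff_id_eq_zero Z).2 h0
    have hiso : IsIso f := (Triangle.isZero₃_iff_isIso₁ _ hT).1 hZzero
    have hinv : inv f ≫ (shiftFunctorZero C ℤ).inv.app X = 0 := hpair 0 _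
    have hinv0 : inv f = 0 := by
      have h2 := congrArg (fun t => t ≫ (shiftFunctorZero C ℤ).hom.app X) hinv
      simpa using h2
    have : (𝟙 X : X ⟶ X) = 0 := by rw [← IsIso.hom_inv_id f, hinv0, comp_zero]
    exact hIdX this
  refine ⟨⟨fun m hm u => hZshift m hm u, ?_⟩, fun m u => homZY m u⟩
  exact finrank_eq_one (𝟙 Z) hIdZ (fun w => by
    obtain ⟨c, hc⟩ := hZspan w; exact ⟨c, hc.symm⟩)
end

section
/- Let (X, Y) be an exceptional pair in C such that Hom(X, Y⟦m⟧) = 0 for all m ≠ 0 and Hom(X, Y) is one-dimensional over k. Let f : X → Y be a nonzero morphism and let W → X →f Y → W⟦1⟧ be a distinguished triangle. Then (W, X) is an exceptional pair; in particular W is an exceptional object and Hom(X, W⟦m⟧) = 0 for all m ∈ ℤ. (The object W is the left mutation L_X Y of Y at X.) -/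
open CategoryTheory CategoryTheory.Limits CategoryTheory.Pretriangulated

section Helpers

variable {C : Type*} [Category C] [Preadditive C] [HasShift C ℤ]
  [∀ m : ℤ, (shiftFunctor C m).Additive]

lemma hom_unshift_zero {A B : C} (hz : ∀ v : A ⟶ B⟦(0 : ℤ)⟧, v = 0) (u : A ⟶ B) : u = 0 := by
  have h0 : u ≫ (shiftFunctorZero C ℤ).inv.app B = 0 := hz _
  rw [← cancel_mono ((shiftFunctorZero C ℤ).inv.app B), zero_comp, h0]

lemma hom_shift_shift_zero {A B : C} {a b m : ℤ} (hab : a + b = m)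
    (hz : ∀ v : A ⟶ B⟦m⟧, v = 0) (u : A ⟶ (B⟦a⟧)⟦b⟧) : u = 0 := by
  have h0 : u ≫ (shiftFunctorAdd' C a b m hab).inv.app B = 0 := hz _
  rw [← cancel_mono ((shiftFunctorAdd' C a b m hab).inv.app B), zero_comp, h0]

lemma shift_hom_zero {A B : C} {n m : ℤ} (hz : ∀ v : A ⟶ B⟦m - n⟧, v = 0)
    (u : A⟦n⟧ ⟶ B⟦m⟧) : u = 0 := by
  have h1 : (shiftFunctorCompIsoId C n (-n) (add_neg_cancel n)).inv.app A ≫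
      u⟦(-n)⟧' ≫ (shiftFunctorAdd' C m (-n) (m - n) (by ring)).inv.app B = 0 := hz _
  have h2 : u⟦(-n)⟧' = 0 := by
    rw [← cancel_epi ((shiftFunctorCompIsoId C n (-n) (add_neg_cancel n)).inv.app A),
      ← cancel_mono ((shiftFunctorAdd' C m (-n) (m - n) (by ring)).inv.app B), Category.assoc,
      h1]
    simp
  exact (shiftFunctor C (-n)).map_injective (by rw [h2, Functor.map_zero])

lemma eq_smul_of_finrank_one {k V : Type*} [Field k] [AddCommGroup V] [Module k V] {v : V}
    (hv : v ≠ 0) (h1 : Module.finrank k V = 1) (g : V) : ∃ c : k, g = c • v := by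
  have hsp := (finrank_eq_one_iff_of_nonzero v hv).1 h1
  have hg : g ∈ Submodule.span k {v} := hsp ▸ Submodule.mem_top
  obtain ⟨c, hc⟩ := Submodule.mem_span_singleton.1 hg
  exact ⟨c, hc.symm⟩

end Helpers

/-- Left mutation of an exceptional pair: if `(X, Y)` is an exceptional pair with
`Hom(X, Y⟦m⟧) = 0` for `m ≠ 0` and `Hom(X, Y)` one-dimensional, `f : X ⟶ Y` nonzero, and
`W ⟶ X ⟶ Y ⟶ W⟦1⟧` a distinguished triangle, then `(W, X)` is an exceptional pair: `W` is
exceptional and `Hom(X, W⟦m⟧) = 0` for all `m`. (`W` is the left mutation `L_X Y`.) -/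
theorem left_mutation_exceptional_pair (k : Type*) [Field k] {C : Type*} [Category C]
    [HasZeroObject C] [Preadditive C] [Linear k C] [HasShift C ℤ]
    [∀ m : ℤ, (shiftFunctor C m).Additive] [∀ m : ℤ, (shiftFunctor C m).Linear k]
    [Pretriangulated C]
    {W X Y : C}
    (hX : IsExceptional k X) (hY : IsExceptional k Y)
    (hpair : ∀ m : ℤ, ∀ f : Y ⟶ X⟦m⟧, f = 0)
    (hXY0 : ∀ m : ℤ, m ≠ 0 → ∀ f : X ⟶ Y⟦m⟧, f = 0)
    (hXY1 : Module.finrank k (X ⟶ Y) = 1)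
    (f : X ⟶ Y) (hf : f ≠ 0)
    (w : W ⟶ X) (h : Y ⟶ W⟦(1 : ℤ)⟧)
    (hT : Triangle.mk w f h ∈ distTriang C) :
    IsExceptional k W ∧ ∀ m : ℤ, ∀ u : X ⟶ W⟦m⟧, u = 0 := by
  have hwf : w ≫ f = 0 := comp_distTriang_mor_zero₁₂ _ hT
  have hfh : f ≫ h = 0 := comp_distTriang_mor_zero₂₃ _ hT
  have idX_ne : (𝟙 X : X ⟶ X) ≠ 0 := by
    intro h0
    have hall : ∀ g : X ⟶ X, g = 0 := fun g => by rw [← Category.comp_id g, h0, comp_zero]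
    have : Subsingleton (X ⟶ X) := ⟨fun a b => by rw [hall a, hall b]⟩
    have h2 := hX.2
    rw [Module.finrank_zero_of_subsingleton] at h2
    exact one_ne_zero h2.symm
  -- Part (a): Hom(X, W⟦m⟧) = 0 for all m
  have hXW : ∀ m : ℤ, ∀ u : X ⟶ W⟦m⟧, u = 0 := by
    intro m u
    by_cases hm1 : m = 1
    · subst hm1
      have hu : u ≫ w⟦(1 : ℤ)⟧' = 0 := hX.1 1 one_ne_zero _
      obtain ⟨g, hg⟩ := Triangle.coyoneda_exact₁ _ hT u hu
      obtain ⟨c, hc⟩ := eq_smul_of_finrank_one hf hXY1 g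
      rw [hg, hc]
      change (c • f) ≫ h = 0
      rw [Linear.smul_comp, hfh, smul_zero]
    by_cases hm0 : m = 0
    · subst hm0
      set u' : X ⟶ W := u ≫ (shiftFunctorZero C ℤ).hom.app W with hu'def
      obtain ⟨c, hc⟩ := eq_smul_of_finrank_one idX_ne hX.2 (u' ≫ w)
      have hcf : c • f = 0 := by
        have h3 : (u' ≫ w) ≫ f = 0 := by rw [Category.assoc, hwf, comp_zero]
        rw [hc, Linear.smul_comp, Category.id_comp] at h3
        exact h3
      have hc0 : c = 0 := by
        rcases smul_eq_zero.1 hcf with h4 | h4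
        · exact h4
        · exact absurd h4 hf
      have hu'w : u' ≫ w = 0 := by rw [hc, hc0, zero_smul]
      obtain ⟨g, hg⟩ := Triangle.coyoneda_exact₂ _ (inv_rot_of_distTriang _ hT) u' hu'w
      have hg0 : g = 0 := hXY0 (-1) (by norm_num) g
      have hu0 : u' = 0 := by rw [hg, hg0]; exact zero_comp
      rw [← cancel_mono ((shiftFunctorZero C ℤ).hom.app W), zero_comp]
      exact hu0
    · have hu : u ≫ ((CategoryTheory.shiftFunctor (Triangle C) m).obj
          (Triangle.mk w f h)).mor₁ = 0 := hX.1 m hm0 _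
      obtain ⟨g, hg⟩ := Triangle.coyoneda_exact₂ _
        (inv_rot_of_distTriang _ (Triangle.shift_distinguished _ hT m)) u hu
      have hg0 : g = 0 := hom_shift_shift_zero (show m + -1 = m - 1 by ring)
        (hXY0 (m - 1) (sub_ne_zero.2 hm1)) g
      rw [hg, hg0]; exact zero_comp
  -- Hom(Y, W⟦m⟧) = 0 for m ≠ 1
  have hYW : ∀ m : ℤ, m ≠ 1 → ∀ v : Y ⟶ W⟦m⟧, v = 0 := by
    intro m hm1 v
    have hv : v ≫ ((CategoryTheory.shiftFunctor (Triangle C) m).obj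
        (Triangle.mk w f h)).mor₁ = 0 := hpair m _
    obtain ⟨g, hg⟩ := Triangle.coyoneda_exact₂ _
      (inv_rot_of_distTriang _ (Triangle.shift_distinguished _ hT m)) v hv
    have hg0 : g = 0 := hom_shift_shift_zero (show m + -1 = m - 1 by ring)
      (hY.1 (m - 1) (sub_ne_zero.2 hm1)) g
    rw [hg, hg0]; exact zero_comp
  -- Hom(W, W⟦m⟧) = 0 for m ≠ 0
  have hWW0 : ∀ m : ℤ, m ≠ 0 → ∀ u : W ⟶ W⟦m⟧, u = 0 := by
    intro m hm u
    have h1 : (Triangle.mk w f h).invRotate.mor₁ ≫ u = 0 :=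
      shift_hom_zero (fun v => hYW (m - -1) (by omega) v) _
    obtain ⟨g, hg⟩ := Triangle.yoneda_exact₂ _ (inv_rot_of_distTriang _ hT) u h1
    rw [hg, hXW m g]; exact comp_zero
  -- 𝟙 W ≠ 0
  have idW_ne : (𝟙 W : W ⟶ W) ≠ 0 := by
    intro h0
    have hw0 : w = 0 := by rw [← Category.id_comp w, h0, zero_comp]
    obtain ⟨g, hg⟩ := Triangle.yoneda_exact₂ _ hT (𝟙 X)
      (by rw [show (Triangle.mk w f h).mor₁ = w from rfl, hw0]; exact zero_comp)
    have hg0 : g = 0 := hom_unshift_zero (hpair 0) g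
    rw [hg0, comp_zero] at hg
    exact idX_ne hg
  -- finrank Hom(W,W) = 1
  haveI : FiniteDimensional k (Y ⟶ Y) := Module.finite_of_finrank_eq_succ hY.2
  let φ : (Y ⟶ Y) →ₗ[k] (Y ⟶ W⟦(1 : ℤ)⟧) := Linear.rightComp k Y h
  have hφ : Function.Surjective φ := by
    intro v
    have hv : v ≫ w⟦(1 : ℤ)⟧' = 0 := hpair 1 _
    obtain ⟨g, hg⟩ := Triangle.coyoneda_exact₁ _ hT v hv
    exact ⟨g, hg.symm⟩
  haveI : Module.Finite k (Y ⟶ W⟦(1 : ℤ)⟧) := Module.Finite.of_surjective φ hφ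
  have hle1 : Module.finrank k (Y ⟶ W⟦(1 : ℤ)⟧) ≤ 1 := by
    have h2 := LinearMap.finrank_range_le φ
    rw [LinearMap.range_eq_top.2 hφ, finrank_top, hY.2] at h2
    exact h2
  let e : Y ≅ (Y⟦(-1 : ℤ)⟧)⟦(1 : ℤ)⟧ :=
    ((shiftFunctorCompIsoId C (-1 : ℤ) (1 : ℤ) (by ring)).symm).app Y
  let ψ : (W ⟶ W) →ₗ[k] (Y ⟶ W⟦(1 : ℤ)⟧) :=
    { toFun := fun u => e.hom ≫ ((Triangle.mk w f h).invRotate.mor₁ ≫ u)⟦(1 : ℤ)⟧'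
      map_add' := by
        intro a b
        erw [Preadditive.comp_add, Functor.map_add, Preadditive.comp_add]
      map_smul' := by
        intro c a
        erw [Linear.comp_smul, Functor.map_smul, Linear.comp_smul]
        rfl }
  have hψ : Function.Injective ψ := by
    rw [injective_iff_map_eq_zero]
    intro u hu
    simp only [ψ, LinearMap.coe_mk, AddHom.coe_mk] at hu
    have h3 : ((Triangle.mk w f h).invRotate.mor₁ ≫ u)⟦(1 : ℤ)⟧' = 0 := by
      exact (cancel_epi e.hom).1 (hu.trans comp_zero.symm)
    have h4 : (Triangle.mk w f h).invRotate.mor₁ ≫ u = 0 :=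
      (shiftFunctor C (1 : ℤ)).map_injective (by rw [h3, Functor.map_zero])
    obtain ⟨g, hg⟩ := Triangle.yoneda_exact₂ _ (inv_rot_of_distTriang _ hT) u h4
    rw [hg, hom_unshift_zero (hXW 0) g]; exact comp_zero
  haveI : FiniteDimensional k (W ⟶ W) := FiniteDimensional.of_injective ψ hψ
  have hle : Module.finrank k (W ⟶ W) ≤ 1 :=
    le_trans (LinearMap.finrank_le_finrank_of_injective hψ) hle1
  haveI : Nontrivial (W ⟶ W) := nontrivial_of_ne _ _ idW_ne
  have hge : 1 ≤ Module.finrank k (W ⟶ W) := Module.finrank_pos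
  exact ⟨⟨hWW0, le_antisymm hle hge⟩, hXW⟩
end

section
/- Let (X, Y) be an exceptional pair in C such that Hom(X, Y⟦m⟧) = 0 for all m ≠ 0 and Hom(X, Y) is one-dimensional over k, let f : X → Y be a nonzero morphism, and let X →f Y → Z → X⟦1⟧ be a distinguished triangle. Let Φ : C ⥤ C be a k-linear triangulated equivalence commuting with the shift, and suppose Φ(X) ≅ X⟦a⟧ and Φ(Y) ≅ Y⟦b⟧ for some integers a, b. Then a = b and Φ(Z) ≅ Z⟦a⟧; that is, an autoequivalence preserving the exceptional pair up to shift also preserves its mutation up to shift. -/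
open CategoryTheory CategoryTheory.Limits CategoryTheory.Pretriangulated

/-- An autoequivalence preserving an exceptional pair up to shift also preserves its mutation
up to shift: if `(X, Y)` is an exceptional pair with `Hom(X, Y⟦m⟧) = 0` for `m ≠ 0` and
`Hom(X, Y)` one-dimensional, `f : X ⟶ Y` nonzero, `X ⟶ Y ⟶ Z ⟶ X⟦1⟧` a distinguished
triangle, and `Φ` a `k`-linear triangulated autoequivalence commuting with the shift with
`Φ(X) ≅ X⟦a⟧` and `Φ(Y) ≅ Y⟦b⟧`, then `a = b` and `Φ(Z) ≅ Z⟦a⟧`. -/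
theorem autoequivalence_preserves_mutation (k : Type*) [Field k] {C : Type*} [Category C]
    [HasZeroObject C] [Preadditive C] [Linear k C] [HasShift C ℤ]
    [∀ m : ℤ, (shiftFunctor C m).Additive] [∀ m : ℤ, (shiftFunctor C m).Linear k]
    [Pretriangulated C]
    (Φ : C ⥤ C) [Φ.Additive] [Φ.Linear k] [Φ.CommShift ℤ] [Φ.IsTriangulated]
    [Φ.IsEquivalence]
    {X Y Z : C}
    (hX : IsExceptional k X) (hY : IsExceptional k Y)
    (hpair : ∀ m : ℤ, ∀ f : Y ⟶ X⟦m⟧, f = 0)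
    (hXY0 : ∀ m : ℤ, m ≠ 0 → ∀ f : X ⟶ Y⟦m⟧, f = 0)
    (hXY1 : Module.finrank k (X ⟶ Y) = 1)
    (f : X ⟶ Y) (hf : f ≠ 0)
    (g : Y ⟶ Z) (h : Z ⟶ X⟦(1 : ℤ)⟧)
    (hT : Triangle.mk f g h ∈ distTriang C)
    (a b : ℤ) (hΦX : Nonempty (Φ.obj X ≅ X⟦a⟧)) (hΦY : Nonempty (Φ.obj Y ≅ Y⟦b⟧)) :
    a = b ∧ Nonempty (Φ.obj Z ≅ Z⟦a⟧) := by
  obtain ⟨e⟩ := hΦX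
  obtain ⟨e'⟩ := hΦY
  set f₁ : X⟦a⟧ ⟶ Y⟦b⟧ := e.inv ≫ Φ.map f ≫ e'.hom with hf₁def
  have hΦf : Φ.map f = e.hom ≫ f₁ ≫ e'.inv := by simp [hf₁def]
  have hf₁ne : f₁ ≠ 0 := by
    intro h0
    apply hf
    apply Φ.map_injective
    rw [hΦf, h0, Φ.map_zero]
    simp
  have hab : a = b := by
    by_contra hne
    have hba : b - a ≠ 0 := by omega
    set f₂ : X⟦a⟧ ⟶ (Y⟦b - a⟧)⟦a⟧ :=
      f₁ ≫ (shiftFunctorAdd' C (b - a) a b (by omega)).hom.app Y with hf₂def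
    have hψ : (shiftFunctor C a).preimage f₂ = 0 := hXY0 (b - a) hba _
    have hf₂ : f₂ = 0 := by
      rw [← (shiftFunctor C a).map_preimage f₂, hψ, Functor.map_zero]
    apply hf₁ne
    have := hf₂
    rw [hf₂def] at this
    simpa using this =≫ (shiftFunctorAdd' C (b - a) a b (by omega)).inv.app Y
  subst hab
  set φ : X ⟶ Y := (shiftFunctor C a).preimage f₁ with hφdef
  have hφ : (shiftFunctor C a).map φ = f₁ := (shiftFunctor C a).map_preimage f₁
  have hφne : φ ≠ 0 := by
    intro h0
    apply hf₁ne
    rw [← hφ, h0, Functor.map_zero]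
  obtain ⟨c, hc⟩ : ∃ c : k, c • f = φ := by
    have hspan : Submodule.span k {f} = ⊤ := (finrank_eq_one_iff_of_nonzero f hf).mp hXY1
    have : φ ∈ Submodule.span k {f} := hspan ▸ Submodule.mem_top
    exact (Submodule.mem_span_singleton).mp this
  have hcne : c ≠ 0 := by
    rintro rfl
    apply hφne
    rw [← hc, zero_smul]
  refine ⟨rfl, ?_⟩
  have hT₁ : Φ.mapTriangle.obj (Triangle.mk f g h) ∈ distTriang C :=
    Φ.map_distinguished _ hT
  have hT₂ : (Pretriangulated.Triangle.shiftFunctor C a).obj (Triangle.mk f g h) ∈ distTriang C :=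
    Pretriangulated.Triangle.shift_distinguished _ hT a
  set d : k := ((a.negOnePow : ℤ) : k) * c⁻¹ with hd
  have hdne : d ≠ 0 := by
    apply mul_ne_zero
    · rcases Int.isUnit_iff.mp (a.negOnePow).isUnit with h1 | h1 <;> rw [h1] <;> norm_num
    · exact inv_ne_zero hcne
  set e₂ : Φ.obj Y ≅ Y⟦a⟧ :=
    { hom := d • e'.hom
      inv := d⁻¹ • e'.inv
      hom_inv_id := by
        rw [Linear.smul_comp, Linear.comp_smul, smul_smul, mul_inv_cancel₀ hdne]
        simp
      inv_hom_id := by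
        rw [Linear.smul_comp, Linear.comp_smul, smul_smul, inv_mul_cancel₀ hdne]
        simp } with he₂
  have hcomm : (Φ.mapTriangle.obj (Triangle.mk f g h)).mor₁ ≫ e₂.hom =
      e.hom ≫ ((Pretriangulated.Triangle.shiftFunctor C a).obj (Triangle.mk f g h)).mor₁ := by
    show Φ.map f ≫ (d • e'.hom) = e.hom ≫ (a.negOnePow • (shiftFunctor C a).map f)
    rw [Linear.comp_smul, hΦf]
    have hf₁eq : f₁ = c • (shiftFunctor C a).map f := by
      rw [← hφ, ← hc, Functor.map_smul]
    simp only [Category.assoc, Iso.inv_hom_id, Category.comp_id, hf₁eq]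
    rw [Linear.comp_smul, smul_smul, Units.smul_def, Preadditive.comp_zsmul,
      ← Int.cast_smul_eq_zsmul k, hd]
    congr 1
    field_simp
  obtain ⟨e₃, -, -⟩ := exists_iso_of_arrow_iso _ _ hT₁ hT₂ (Arrow.isoMk e e₂ hcomm.symm)
  exact ⟨Pretriangulated.Triangle.π₃.mapIso e₃⟩
end
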